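/- arXiv:2407.16507 — 2 statements merged into one kernel-verified Lean document; each statement's English description precedes it below -/
import Mathlib

section
/- If (u, Ω) with Ω ≠ 0 satisfies Ω² ∂²_τ u = ∂²_x u − u³ (defocusing equation) pointwise on ℝ², then ũ(τ,x) := Ω⁻¹ u(x, τ) together with Ω̃ := Ω⁻¹ satisfies the focusing equation Ω̃² ∂²_τ ũ = ∂²_x ũ + ũ³ pointwise. -/
/-- The transformation `ũ(τ,x) = Ω⁻¹ u(x,τ)`, `Ω̃ = Ω⁻¹` maps a solution of the
defocusing rescaled cubic wave equation to a solution of the focusing one. -/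
theorem defocusing_to_focusing
    (u : ℝ → ℝ → ℝ) (Ω : ℝ) (hΩ : Ω ≠ 0)
    (hu : ContDiff ℝ 2 (fun p : ℝ × ℝ => u p.1 p.2))
    (hpde : ∀ τ x : ℝ,
      Ω ^ 2 * deriv (fun s => deriv (fun s' => u s' x) s) τ =
        deriv (fun y => deriv (fun y' => u τ y') y) x - (u τ x) ^ 3) :
    ∀ τ x : ℝ,
      (Ω⁻¹) ^ 2 * deriv (fun s => deriv (fun s' => Ω⁻¹ * u x s') s) τ =
        deriv (fun y => deriv (fun y' => Ω⁻¹ * u y' τ) y) x + (Ω⁻¹ * u x τ) ^ 3 := by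
  intro τ x
  have h : Ω ^ 2 * deriv (deriv (fun y => u y τ)) x =
      deriv (deriv (u x)) τ - u x τ ^ 3 := hpde x τ
  simp only [deriv_const_mul_field]
  field_simp at h ⊢
  linear_combination (-1) * h
end

section
/- Let 0 < q < 1, α a positive multiple of 4, and f_n = q^{n/2}/(1+q^n) for odd n, 0 for even n. Then ∑_{j=1}^{α/2} ( 1/(1+q^{α−(2j−1)}) + q^{2j−1}/(1+q^{2j−1}) ) = α/2, and consequently ∑_{j=1}^{α−1} f_j f_{α−j} + 2∑_{j=1}^∞ f_{α+j} f_j = (α/2) · q^{α/2}/(1−q^α). -/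
/-- The Fourier coefficients of `cn`: `f n = q^(n/2)/(1+q^n)` for odd `n`, `0` otherwise. -/
noncomputable def cnCoeff (q : ℝ) (n : ℕ) : ℝ :=
  if Odd n then q ^ ((n : ℝ) / 2) / (1 + q ^ n) else 0

private lemma sum_odd_ind (n : ℕ) :
    ∑ j ∈ Finset.range (2 * n), (if Odd j then (1:ℝ) else 0) = n := by
  induction n with
  | zero => simp
  | succ k ih =>
    have h : 2 * (k + 1) = (2 * k + 1) + 1 := by ring
    rw [h, Finset.sum_range_succ, Finset.sum_range_succ, ih]
    have h1 : ¬ Odd (2 * k) := by simp [Nat.odd_iff]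
    have h2 : Odd (2 * k + 1) := ⟨k, by ring⟩
    simp [h1, h2]

private lemma keyA {q : ℝ} (hq0 : 0 < q) (hq1 : q < 1) {α : ℕ} (hα : 0 < α)
    (hE : Even α) (n : ℕ) :
    cnCoeff q (α + n) * cnCoeff q n
      = q ^ ((α : ℝ) / 2) / (1 - q ^ α) *
        ((if Odd n then q ^ n / (1 + q ^ n) else 0)
          - (if Odd (α + n) then q ^ (α + n) / (1 + q ^ (α + n)) else 0)) := by
  have hd : ∀ m : ℕ, (1:ℝ) + q ^ m ≠ 0 := fun m => by positivity
  have h1α : (1:ℝ) - q ^ α ≠ 0 := by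
    have := pow_lt_one₀ hq0.le hq1 hα.ne'
    intro h; linarith
  by_cases hn : Odd n
  · have hαn : Odd (α + n) := hE.add_odd hn
    simp only [cnCoeff, hn, hαn, if_pos]
    have hnum : q ^ (((α + n : ℕ) : ℝ) / 2) * q ^ ((n : ℝ) / 2)
        = q ^ ((α : ℝ) / 2) * q ^ n := by
      rw [← Real.rpow_natCast q n, ← Real.rpow_add hq0, ← Real.rpow_add hq0]
      congr 1; push_cast; ring
    rw [div_mul_div_comm, hnum]
    field_simp [hd, h1α]
    ring
  · have hαn : ¬ Odd (α + n) := by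
      rw [Nat.not_odd_iff_even] at hn ⊢
      exact hE.add hn
    simp [cnCoeff, hn, hαn]

private lemma keyB {q : ℝ} (hq0 : 0 < q) (hq1 : q < 1) {α : ℕ} (hα : 0 < α)
    (hE : Even α) {j : ℕ} (h1 : 1 ≤ j) (h2 : j ≤ α - 1) :
    cnCoeff q j * cnCoeff q (α - j)
      = q ^ ((α : ℝ) / 2) / (1 - q ^ α) *
        ((if Odd j then 1 / (1 + q ^ j) else 0)
          - (if Odd (α - j) then q ^ (α - j) / (1 + q ^ (α - j)) else 0)) := by
  have hjα : j ≤ α := by omega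
  have hd : ∀ m : ℕ, (1:ℝ) + q ^ m ≠ 0 := fun m => by positivity
  have h1α : (1:ℝ) - q ^ α ≠ 0 := by
    have := pow_lt_one₀ hq0.le hq1 hα.ne'
    intro h; linarith
  obtain ⟨m, hm⟩ : ∃ m, α = j + m := ⟨α - j, by omega⟩
  subst hm
  have hsub : (j + m) - j = m := by omega
  rw [hsub] at *
  by_cases hn : Odd j
  · have hαj : Odd m := by
      simp only [Nat.even_iff, Nat.odd_iff] at hE hn ⊢
      omega
    simp only [cnCoeff, hn, hαj, if_pos]
    have hnum : q ^ ((j : ℝ) / 2) * q ^ ((m : ℝ) / 2)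
        = q ^ (((j + m : ℕ) : ℝ) / 2) := by
      rw [← Real.rpow_add hq0]
      congr 1; push_cast; ring
    rw [div_mul_div_comm, hnum]
    field_simp [hd, h1α]
    ring
  · have hαj : ¬ Odd m := by
      simp only [Nat.even_iff, Nat.odd_iff, Nat.not_odd_iff_even] at hE hn ⊢
      omega
    simp [cnCoeff, hn, hαj]

theorem sum_cnCoeff_combined (q : ℝ) (hq0 : 0 < q) (hq1 : q < 1)
    (α : ℕ) (hα : 0 < α) (h4 : 4 ∣ α) :
    (∑ j ∈ Finset.range (α / 2),
        (1 / (1 + q ^ (α - (2 * j + 1))) + q ^ (2 * j + 1) / (1 + q ^ (2 * j + 1))))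
      = (α : ℝ) / 2 ∧
    (∑ j ∈ Finset.Icc 1 (α - 1), cnCoeff q j * cnCoeff q (α - j))
        + 2 * ∑' j : ℕ, cnCoeff q (α + (j + 1)) * cnCoeff q (j + 1)
      = ((α : ℝ) / 2) * q ^ ((α : ℝ) / 2) / (1 - q ^ α) := by
  obtain ⟨k, hk⟩ := h4
  have hE : Even α := ⟨2 * k, by omega⟩
  have hα2 : 2 * (α / 2) = α := by omega
  have hd : ∀ m : ℕ, (1:ℝ) + q ^ m ≠ 0 := fun m => by positivity
  have h1α : (1:ℝ) - q ^ α ≠ 0 := by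
    have := pow_lt_one₀ hq0.le hq1 hα.ne'
    intro h; linarith
  have hcast : ((α / 2 : ℕ) : ℝ) = (α : ℝ) / 2 := by
    have : ((α : ℝ)) = 2 * ((α / 2 : ℕ) : ℝ) := by exact_mod_cast hα2.symm
    linarith
  constructor
  · have hrefl : ∑ j ∈ Finset.range (α / 2), 1 / (1 + q ^ (α - (2 * j + 1)))
        = ∑ j ∈ Finset.range (α / 2), 1 / (1 + q ^ (2 * j + 1)) := by
      rw [← Finset.sum_range_reflect (fun j => 1 / (1 + q ^ (2 * j + 1))) (α / 2)]
      refine Finset.sum_congr rfl fun j hj => ?_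
      simp only [Finset.mem_range] at hj
      have : 2 * (α / 2 - 1 - j) + 1 = α - (2 * j + 1) := by omega
      rw [this]
    rw [Finset.sum_add_distrib, hrefl, ← Finset.sum_add_distrib]
    have hone : ∀ j ∈ Finset.range (α / 2),
        1 / (1 + q ^ (2 * j + 1)) + q ^ (2 * j + 1) / (1 + q ^ (2 * j + 1)) = 1 := by
      intro j _
      rw [← add_div, div_self (hd _)]
    rw [Finset.sum_congr rfl hone, Finset.sum_const, nsmul_eq_mul, mul_one, Finset.card_range, hcast]
  · set c : ℝ := q ^ ((α : ℝ) / 2) / (1 - q ^ α) with hc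
    set G : ℕ → ℝ := fun n => if Odd n then q ^ n / (1 + q ^ n) else 0 with hG
    set U : ℕ → ℝ := fun n => if Odd n then 1 / (1 + q ^ n) else 0 with hU
    -- finite sum
    have hfin : ∑ j ∈ Finset.Icc 1 (α - 1), cnCoeff q j * cnCoeff q (α - j)
        = c * (∑ j ∈ Finset.Icc 1 (α - 1), U j - ∑ j ∈ Finset.Icc 1 (α - 1), G j) := by
      have step1 : ∑ j ∈ Finset.Icc 1 (α - 1), cnCoeff q j * cnCoeff q (α - j)
          = ∑ j ∈ Finset.Icc 1 (α - 1), c * (U j - G (α - j)) := by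
        refine Finset.sum_congr rfl fun j hj => ?_
        simp only [Finset.mem_Icc] at hj
        exact keyB hq0 hq1 hα hE hj.1 hj.2
      have step2 : ∑ j ∈ Finset.Icc 1 (α - 1), G (α - j)
          = ∑ j ∈ Finset.Icc 1 (α - 1), G j := by
        refine Finset.sum_nbij' (fun j => α - j) (fun j => α - j) ?_ ?_ ?_ ?_ ?_ <;>
          intro a ha <;> simp only [Finset.mem_Icc] at * <;> omega
      rw [step1, ← Finset.mul_sum, Finset.sum_sub_distrib, step2]
    -- infinite sum
    have hVsum : Summable (fun n : ℕ => G (n + 1)) := by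
      have hgeo : Summable (fun n : ℕ => q ^ (n + 1)) := by
        have h := (summable_geometric_of_lt_one hq0.le hq1).mul_left q
        exact h.congr fun n => by rw [← pow_succ']
      refine Summable.of_nonneg_of_le (fun n => ?_) (fun n => ?_) hgeo
      · simp only [hG]; split
        · positivity
        · exact le_rfl
      · simp only [hG]; split
        · rw [div_le_iff₀ (by positivity)]
          nlinarith [pow_pos hq0 (n+1), pow_nonneg hq0.le (n+1)]
        · positivity
    have hVsum' : Summable (fun n : ℕ => G (n + α + 1)) := by
      have := (summable_nat_add_iff (f := fun n : ℕ => G (n + 1)) α).mpr hVsum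
      exact this.congr fun n => by ring_nf
    have hinf : ∑' j : ℕ, cnCoeff q (α + (j + 1)) * cnCoeff q (j + 1)
        = c * ∑ j ∈ Finset.Icc 1 (α - 1), G j := by
      have e1 : ∑' j : ℕ, cnCoeff q (α + (j + 1)) * cnCoeff q (j + 1)
          = ∑' j : ℕ, c * (G (j + 1) - G (j + α + 1)) := by
        refine tsum_congr fun j => ?_
        have h := keyA hq0 hq1 hα hE (j + 1)
        rw [show α + (j + 1) = j + α + 1 from by omega] at h ⊢
        simpa [hG, hc] using h
      rw [e1, tsum_mul_left]
      congr 1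
      rw [Summable.tsum_sub hVsum hVsum']
      have e2 : ∑ i ∈ Finset.range α, G (i + 1)
            + ∑' (i : ℕ), G (i + α + 1) = ∑' (i : ℕ), G (i + 1) := by
        have := Summable.sum_add_tsum_nat_add (f := fun n : ℕ => G (n + 1)) α hVsum
        simpa using this
      have e3 : ∑ i ∈ Finset.range α, G (i + 1) = ∑ j ∈ Finset.Icc 1 (α - 1), G j := by
        have r1 : ∑ i ∈ Finset.range α, G (i + 1) = ∑ j ∈ Finset.Icc 1 α, G j := by
          refine Finset.sum_nbij' (fun i => i + 1) (fun j => j - 1) ?_ ?_ ?_ ?_ ?_ <;>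
            intro a ha <;> simp only [Finset.mem_Icc, Finset.mem_range] at * <;> omega
        have r2 : ∑ j ∈ Finset.Icc 1 α, G j = ∑ j ∈ Finset.Icc 1 (α - 1), G j + G α := by
          have := Finset.sum_Icc_succ_top (a := 1) (b := α - 1) (by omega) G
          rw [show α - 1 + 1 = α by omega] at this
          exact this
        have r3 : G α = 0 := by
          simp [hG, Nat.not_odd_iff_even.mpr hE]
        rw [r1, r2, r3, add_zero]
      linarith [e2, e3]
    rw [hfin, hinf]
    have hind : ∑ j ∈ Finset.Icc 1 (α - 1), (U j + G j) = (α : ℝ) / 2 := by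
      have p1 : ∀ j ∈ Finset.Icc 1 (α - 1), U j + G j = (if Odd j then (1:ℝ) else 0) := by
        intro j _
        simp only [hU, hG]
        split
        · rw [← add_div, div_self (hd _)]
        · simp
      rw [Finset.sum_congr rfl p1]
      have p2 : Finset.range α = insert 0 (Finset.Icc 1 (α - 1)) := by
        ext x; simp only [Finset.mem_range, Finset.mem_insert, Finset.mem_Icc]; omega
      have p3 : ∑ j ∈ Finset.range α, (if Odd j then (1:ℝ) else 0)
          = ∑ j ∈ Finset.Icc 1 (α - 1), (if Odd j then (1:ℝ) else 0) := by
        rw [p2, Finset.sum_insert (by simp)]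
        simp
      rw [← p3, ← hα2, sum_odd_ind, hα2, hcast]
    have : c * (∑ j ∈ Finset.Icc 1 (α-1), U j - ∑ j ∈ Finset.Icc 1 (α-1), G j)
        + 2 * (c * ∑ j ∈ Finset.Icc 1 (α-1), G j)
        = c * ∑ j ∈ Finset.Icc 1 (α-1), (U j + G j) := by
      rw [Finset.sum_add_distrib]; ring
    rw [this, hind, hc]
    ring
end
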